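/- Let D and D̃ be dictionaries, let z* be a minimizer of the LASSO objective for D at x and t* a minimizer of the LASSO objective for D̃ at x, and suppose ‖z* − t*‖_0 ≤ k. Then (z* − t*)ᵀ DᵀD (z* − t*) ≤ (4 ‖x‖_2² / λ) · ‖D − D̃‖_{1,2} · √k · ‖z* − t*‖_2. -/

import Mathlib

open Finset Matrix

noncomputable def norm2 {ι : Type*} [Fintype ι] (v : ι → ℝ) : ℝ :=
  Real.sqrt (∑ i, v i ^ 2)

noncomputable def norm1 {ι : Type*} [Fintype ι] (v : ι → ℝ) : ℝ :=
  ∑ i, |v i|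

noncomputable def norm0 {ι : Type*} (v : ι → ℝ) : ℕ :=
  Set.ncard {i | v i ≠ 0}

noncomputable def dot {ι : Type*} [Fintype ι] (u v : ι → ℝ) : ℝ :=
  ∑ i, u i * v i

def col {d m : ℕ} (D : Matrix (Fin d) (Fin m) ℝ) (i : Fin m) : Fin d → ℝ :=
  fun r => D r i

def IsDictionary {d m : ℕ} (D : Matrix (Fin d) (Fin m) ℝ) : Prop :=
  ∀ i, norm2 (_root_.col D i) = 1

noncomputable def norm12 {d m : ℕ} (E : Matrix (Fin d) (Fin m) ℝ) : ℝ :=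
  ⨆ i : Fin m, norm2 (_root_.col E i)

noncomputable def lassoObj {d m : ℕ} (lam : ℝ) (D : Matrix (Fin d) (Fin m) ℝ)
    (x : Fin d → ℝ) (z : Fin m → ℝ) : ℝ :=
  (1/2) * (norm2 (x - D.mulVec z))^2 + lam * norm1 z

def IsLassoMin {d m : ℕ} (lam : ℝ) (D : Matrix (Fin d) (Fin m) ℝ)
    (x : Fin d → ℝ) (a : Fin m → ℝ) : Prop :=
  ∀ z, lassoObj lam D x a ≤ lassoObj lam D x z

def Incoherent {d m : ℕ} (mu : ℝ) (D : Matrix (Fin d) (Fin m) ℝ) : Prop :=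
  ∀ i j, i ≠ j → |dot (_root_.col D i) (_root_.col D j)| ≤ mu / Real.sqrt d

noncomputable def kMargin {d m : ℕ} (lam : ℝ) (k : ℕ) (D : Matrix (Fin d) (Fin m) ℝ)
    (x : Fin d → ℝ) (a : Fin m → ℝ) : ℝ :=
  ⨆ I : {I : Finset (Fin m) // I.card = m - k},
    ⨅ j : {j : Fin m // j ∈ I.1}, (lam - |dot (_root_.col D j.1) (x - D.mulVec a)|)

section auxLemmas
variable {ι : Type*} [Fintype ι]

lemma norm2_nonneg (v : ι → ℝ) : 0 ≤ norm2 v := Real.sqrt_nonneg _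

lemma norm1_nonneg (v : ι → ℝ) : 0 ≤ norm1 v :=
  Finset.sum_nonneg fun _ _ => abs_nonneg _

lemma norm2_sq (v : ι → ℝ) : norm2 v ^ 2 = ∑ i, v i ^ 2 :=
  Real.sq_sqrt (Finset.sum_nonneg fun _ _ => sq_nonneg _)

lemma dot_le (u v : ι → ℝ) : dot u v ≤ norm2 u * norm2 v := by
  unfold dot norm2
  exact Real.sum_mul_le_sqrt_mul_sqrt _ _ _

lemma neg_dot_le (u v : ι → ℝ) : -(dot u v) ≤ norm2 u * norm2 v := by
  have h := dot_le (-u) v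
  have h1 : dot (-u) v = -(dot u v) := by
    unfold dot; rw [← Finset.sum_neg_distrib]
    exact Finset.sum_congr rfl fun i _ => by simp [neg_mul]
  have h2 : norm2 (-u) = norm2 u := by
    unfold norm2; congr 1; exact Finset.sum_congr rfl fun i _ => by simp
  rw [h1, h2] at h; exact h

lemma norm2_smul_sq (s : ℝ) (v : ι → ℝ) : norm2 (s • v) ^ 2 = s ^ 2 * norm2 v ^ 2 := by
  rw [norm2_sq, norm2_sq, Finset.mul_sum]
  exact Finset.sum_congr rfl fun i _ => by simp [mul_pow]

lemma norm2_sub_sq (a b : ι → ℝ) :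
    norm2 (a - b) ^ 2 = norm2 a ^ 2 - 2 * dot a b + norm2 b ^ 2 := by
  simp only [norm2_sq]
  unfold dot
  rw [Finset.mul_sum, ← Finset.sum_sub_distrib, ← Finset.sum_add_distrib]
  exact Finset.sum_congr rfl fun i _ => by simp [Pi.sub_apply]; ring

lemma norm1_eq_zero {v : ι → ℝ} (h : norm1 v = 0) : v = 0 := by
  funext i
  have := (Finset.sum_eq_zero_iff_of_nonneg
    (fun i _ => abs_nonneg (v i))).mp h i (Finset.mem_univ i)
  simpa [abs_eq_zero] using this

lemma norm1_le_sqrt_norm0 (v : ι → ℝ) : norm1 v ≤ Real.sqrt (norm0 v) * norm2 v := by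
  classical
  set S := Finset.univ.filter (fun i => v i ≠ 0) with hS
  have h0 : (norm0 v : ℝ) = (S.card : ℝ) := by
    unfold norm0
    congr 1
    rw [show {i | v i ≠ 0} = (S : Set ι) by ext i; simp [hS]]
    exact Set.ncard_coe_finset S
  have h1 : norm1 v = ∑ i ∈ S, |v i| :=
    (Finset.sum_subset (Finset.subset_univ S) (fun i _ hi => by
      simp [hS] at hi; simp [hi])).symm
  have h2 : (∑ i ∈ S, |v i|) ^ 2 ≤ (S.card : ℝ) * norm2 v ^ 2 := by
    have := Finset.sum_mul_sq_le_sq_mul_sq S (fun _ => (1 : ℝ)) (fun i => |v i|)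
    simp only [one_mul, one_pow, Finset.sum_const, nsmul_eq_mul, mul_one] at this
    refine this.trans ?_
    rw [norm2_sq]
    refine mul_le_mul_of_nonneg_left ?_ (Nat.cast_nonneg _)
    refine (Finset.sum_le_sum_of_subset_of_nonneg (Finset.subset_univ S)
      (fun i _ _ => sq_nonneg _)).trans ?_
    exact le_of_eq (Finset.sum_congr rfl fun i _ => sq_abs (v i))
  have h3 : norm1 v ^ 2 ≤ (Real.sqrt (norm0 v) * norm2 v) ^ 2 := by
    rw [mul_pow, Real.sq_sqrt (Nat.cast_nonneg _), h0, h1]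
    exact h2
  have h4 : 0 ≤ Real.sqrt (norm0 v) * norm2 v :=
    mul_nonneg (Real.sqrt_nonneg _) (norm2_nonneg _)
  nlinarith [norm1_nonneg v]

lemma norm2_eq_norm (v : ι → ℝ) :
    norm2 v = ‖(WithLp.equiv 2 (ι → ℝ)).symm v‖ := by
  rw [EuclideanSpace.norm_eq]
  unfold norm2
  congr 1
  exact Finset.sum_congr rfl fun i _ => by
    show v i ^ 2 = ‖v i‖ ^ 2
    rw [Real.norm_eq_abs, sq_abs]

lemma dot_sub_left (a b c : ι → ℝ) : dot (a - b) c = dot a c - dot b c := by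
  unfold dot
  rw [← Finset.sum_sub_distrib]
  exact Finset.sum_congr rfl fun i _ => by simp [Pi.sub_apply]; ring

lemma dot_sub_right (a b c : ι → ℝ) : dot a (b - c) = dot a b - dot a c := by
  unfold dot
  rw [← Finset.sum_sub_distrib]
  exact Finset.sum_congr rfl fun i _ => by simp [Pi.sub_apply]; ring

lemma dot_smul_right (s : ℝ) (a b : ι → ℝ) : dot a (s • b) = s * dot a b := by
  unfold dot
  rw [Finset.mul_sum]
  exact Finset.sum_congr rfl fun i _ => by simp [Pi.smul_apply, smul_eq_mul]; ring

end auxLemmas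

lemma norm2_mulVec_le {d m : ℕ} (D : Matrix (Fin d) (Fin m) ℝ) (v : Fin m → ℝ) :
    norm2 (D.mulVec v) ≤ ∑ i, |v i| * norm2 (_root_.col D i) := by
  have hrep : D.mulVec v = ∑ i, v i • _root_.col D i := by
    funext r
    rw [Finset.sum_apply]
    simp only [Matrix.mulVec, dotProduct, _root_.col, Pi.smul_apply, smul_eq_mul]
    exact Finset.sum_congr rfl fun i _ => mul_comm _ _
  rw [norm2_eq_norm, hrep]
  have h2 : (WithLp.equiv 2 (Fin d → ℝ)).symm (∑ i, v i • _root_.col D i)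
      = ∑ i, v i • (WithLp.equiv 2 (Fin d → ℝ)).symm (_root_.col D i) := by
    ext j; simp [Finset.sum_apply]
  rw [h2]
  refine (norm_sum_le _ _).trans ?_
  refine Finset.sum_le_sum fun i _ => ?_
  rw [norm_smul, Real.norm_eq_abs, norm2_eq_norm]

lemma col_le_norm12 {d m : ℕ} (E : Matrix (Fin d) (Fin m) ℝ) (i : Fin m) :
    norm2 (_root_.col E i) ≤ norm12 E := by
  unfold norm12
  exact le_ciSup (f := fun j => norm2 (_root_.col E j))
    (Set.Finite.bddAbove (Set.finite_range _)) i

lemma norm12_nonneg {d m : ℕ} (E : Matrix (Fin d) (Fin m) ℝ) : 0 ≤ norm12 E := by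
  rcases isEmpty_or_nonempty (Fin m) with h | h
  · haveI := h
    unfold norm12
    rw [Real.iSup_of_isEmpty]
  · exact (norm2_nonneg _).trans (col_le_norm12 E (Classical.arbitrary _))

lemma norm2_mulVec_le' {d m : ℕ} (E : Matrix (Fin d) (Fin m) ℝ) (v : Fin m → ℝ) :
    norm2 (E.mulVec v) ≤ norm12 E * norm1 v := by
  refine (norm2_mulVec_le E v).trans ?_
  unfold norm1
  rw [Finset.mul_sum]
  refine Finset.sum_le_sum fun i _ => ?_
  rw [mul_comm (norm12 E)]
  exact mul_le_mul_of_nonneg_left (col_le_norm12 E i) (abs_nonneg _)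

lemma norm2_mulVec_le_dict {d m : ℕ} {D : Matrix (Fin d) (Fin m) ℝ}
    (hD : IsDictionary D) (v : Fin m → ℝ) : norm2 (D.mulVec v) ≤ norm1 v := by
  refine (norm2_mulVec_le D v).trans (le_of_eq ?_)
  unfold norm1
  exact Finset.sum_congr rfl fun i _ => by rw [hD i, mul_one]

lemma norm1_zero {m : ℕ} : norm1 (0 : Fin m → ℝ) = 0 := by
  unfold norm1; simp

lemma lam_norm1_le {d m : ℕ} {lam : ℝ} {D : Matrix (Fin d) (Fin m) ℝ}
    {x : Fin d → ℝ} {z : Fin m → ℝ} (hz : IsLassoMin lam D x z) :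
    lam * norm1 z ≤ 1/2 * norm2 x ^ 2 := by
  have h := hz 0
  unfold lassoObj at h
  rw [Matrix.mulVec_zero, sub_zero, norm1_zero, mul_zero, add_zero] at h
  nlinarith [sq_nonneg (norm2 (x - D.mulVec z))]

lemma lasso_min_zero {d m : ℕ} {lam : ℝ} {D : Matrix (Fin d) (Fin m) ℝ}
    (hD : IsDictionary D) {x : Fin d → ℝ} {z : Fin m → ℝ}
    (hz : IsLassoMin lam D x z) (hlt : norm2 x < lam) : z = 0 := by
  have h := hz 0
  unfold lassoObj at h
  rw [Matrix.mulVec_zero, sub_zero, norm1_zero, mul_zero, add_zero] at h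
  have hexp := norm2_sub_sq x (D.mulVec z)
  have hcs := dot_le x (D.mulVec z)
  have hDz := norm2_mulVec_le_dict hD z
  have hXnn := norm2_nonneg x
  have hn1 := norm1_nonneg z
  have hDznn := norm2_nonneg (D.mulVec z)
  have hkey : norm1 z ≤ 0 := by
    nlinarith [mul_le_mul_of_nonneg_left hDz hXnn, sq_nonneg (norm2 (D.mulVec z))]
  exact norm1_eq_zero (le_antisymm hkey hn1)

lemma lasso_vi {d m : ℕ} {lam : ℝ} (hlam : 0 ≤ lam) {D : Matrix (Fin d) (Fin m) ℝ}
    {x : Fin d → ℝ} {z : Fin m → ℝ} (hz : IsLassoMin lam D x z) (v : Fin m → ℝ) :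
    0 ≤ dot (D.mulVec z - x) (D.mulVec v) + lam * (norm1 (z + v) - norm1 z) := by
  set q := x - D.mulVec z with hq
  set w := D.mulVec v with hw
  set c := dot (D.mulVec z - x) w + lam * (norm1 (z + v) - norm1 z) with hc
  have hcq : dot (D.mulVec z - x) w = -(dot q w) := by
    rw [hq]
    unfold dot
    rw [← Finset.sum_neg_distrib]
    exact Finset.sum_congr rfl fun i _ => by simp [Pi.sub_apply]; ring
  have key : ∀ s : ℝ, 0 < s → s ≤ 1 → 0 ≤ c + s * (norm2 w ^ 2 / 2) := by
    intro s hs hs1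
    have h := hz (z + s • v)
    have hmv : x - D.mulVec (z + s • v) = q - s • w := by
      rw [Matrix.mulVec_add, Matrix.mulVec_smul, sub_add_eq_sub_sub, hq, hw]
    have hquad : norm2 (x - D.mulVec (z + s • v)) ^ 2
        = norm2 q ^ 2 - 2 * (s * dot q w) + s ^ 2 * norm2 w ^ 2 := by
      rw [hmv, norm2_sub_sq, dot_smul_right, norm2_smul_sq]
    have hl1 : norm1 (z + s • v) ≤ norm1 z + s * (norm1 (z + v) - norm1 z) := by
      have hpt : ∀ i, |z i + s * v i| ≤ (1 - s) * |z i| + s * |z i + v i| := fun i => by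
        have he : z i + s * v i = (1 - s) * z i + s * (z i + v i) := by ring
        rw [he]
        refine (abs_add_le _ _).trans ?_
        rw [abs_mul, abs_mul, abs_of_nonneg (by linarith : (0:ℝ) ≤ 1 - s), abs_of_pos hs]
      calc norm1 (z + s • v) = ∑ i, |z i + s * v i| :=
            Finset.sum_congr rfl fun i _ => by
              simp [Pi.add_apply, Pi.smul_apply, smul_eq_mul]
        _ ≤ ∑ i, ((1 - s) * |z i| + s * |z i + v i|) :=
            Finset.sum_le_sum fun i _ => hpt i
        _ = (1 - s) * norm1 z + s * norm1 (z + v) := by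
            rw [Finset.sum_add_distrib, ← Finset.mul_sum, ← Finset.mul_sum]
            simp [norm1, Pi.add_apply]
        _ = norm1 z + s * (norm1 (z + v) - norm1 z) := by ring
    unfold lassoObj at h
    rw [hquad] at h
    have hlam2 : lam * norm1 (z + s • v)
        ≤ lam * (norm1 z + s * (norm1 (z + v) - norm1 z)) :=
      mul_le_mul_of_nonneg_left hl1 hlam
    have h0 : 0 ≤ s * c + s ^ 2 * (norm2 w ^ 2 / 2) := by
      rw [hc, hcq]
      have hqx : norm2 (x - D.mulVec z) = norm2 q := by rw [hq]
      rw [hqx] at h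
      nlinarith [h, hlam2]
    by_contra hcon
    push_neg at hcon
    nlinarith [h0, hs]
  have hA : 0 ≤ norm2 w ^ 2 / 2 := by positivity
  by_contra hcon
  push_neg at hcon
  set A := norm2 w ^ 2 / 2 with hA'
  have hA1 : (0:ℝ) < 2 * (A + 1) := by linarith
  set s := min 1 (-c / (2 * (A + 1))) with hs'
  have hsp : 0 < s := lt_min one_pos (div_pos (by linarith) hA1)
  have hs1 : s ≤ 1 := min_le_left _ _
  have hkey := key s hsp hs1
  have h2 : s ≤ -c / (2 * (A + 1)) := min_le_right _ _
  have h3 : s * (2 * (A + 1)) ≤ -c := (le_div_iff₀ hA1).mp h2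
  nlinarith [mul_nonneg hsp.le hA]

theorem lasso_quadratic_form_bound {d m : ℕ} (lam : ℝ) (hlam : 0 < lam) (k : ℕ)
    (D Dt : Matrix (Fin d) (Fin m) ℝ) (hD : IsDictionary D) (hDt : IsDictionary Dt)
    (x : Fin d → ℝ) (z t : Fin m → ℝ)
    (hz : IsLassoMin lam D x z) (ht : IsLassoMin lam Dt x t)
    (hsparse : norm0 (z - t) ≤ k) :
    dot (D.mulVec (z - t)) (D.mulVec (z - t))
      ≤ (4 * (norm2 x)^2 / lam) * norm12 (D - Dt) * Real.sqrt k * norm2 (z - t) := by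
  rcases le_or_gt lam (norm2 x) with hcase | hcase
  · -- main case : lam ≤ ‖x‖
    set P := D.mulVec (z - t) with hP
    set Pt := Dt.mulVec (z - t) with hPt
    set Eu := (D - Dt).mulVec (z - t) with hEu
    set Et := (D - Dt).mulVec t with hEt
    have hvi1 := lasso_vi hlam.le hz (t - z)
    have hvi2 := lasso_vi hlam.le ht (z - t)
    rw [show z + (t - z) = t by abel] at hvi1
    rw [show t + (z - t) = z by abel] at hvi2
    have hswap : dot (D.mulVec z - x) (D.mulVec (t - z))
        = -(dot (D.mulVec z - x) P) := by
      rw [hP]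
      simp only [Matrix.mulVec_sub, dot_sub_right]
      ring
    rw [hswap] at hvi1
    have hdelta : dot (D.mulVec z - x) P - dot (Dt.mulVec t - x) Pt ≤ 0 := by
      rw [hPt]; linarith [hvi1, hvi2]
    have hid : dot P P = (dot (D.mulVec z - x) P - dot (Dt.mulVec t - x) Pt)
        + dot x Eu - dot (Dt.mulVec t) Eu - dot Et P := by
      rw [hP, hPt, hEu, hEt]
      simp only [Matrix.mulVec_sub, Matrix.sub_mulVec, dot_sub_left, dot_sub_right]
      ring
    have hbd : dot P P ≤ norm2 x * norm2 Eu + norm2 (Dt.mulVec t) * norm2 Eu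
        + norm2 Et * norm2 P := by
      rw [hid]
      have b1 := dot_le x Eu
      have b2 := neg_dot_le (Dt.mulVec t) Eu
      have b3 := neg_dot_le Et P
      linarith
    -- norm estimates
    set X := norm2 x with hX
    set eps := norm12 (D - Dt) with heps
    set a := norm1 (z - t) with ha
    set b := norm1 t with hb
    set nu := norm2 (z - t) with hnu
    set sk := Real.sqrt k with hsk
    have hXnn : 0 ≤ X := norm2_nonneg x
    have hepsnn : 0 ≤ eps := norm12_nonneg _
    have hann : 0 ≤ a := norm1_nonneg _
    have hbnn : 0 ≤ b := norm1_nonneg _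
    have hnunn : 0 ≤ nu := norm2_nonneg _
    have hsknn : 0 ≤ sk := Real.sqrt_nonneg _
    have hEub : norm2 Eu ≤ eps * a := norm2_mulVec_le' _ _
    have hEtb : norm2 Et ≤ eps * b := norm2_mulVec_le' _ _
    have hPb : norm2 P ≤ a := norm2_mulVec_le_dict hD _
    have hDttb : norm2 (Dt.mulVec t) ≤ b := norm2_mulVec_le_dict hDt _
    have hab : a ≤ sk * nu := by
      refine (norm1_le_sqrt_norm0 (z - t)).trans ?_
      refine mul_le_mul_of_nonneg_right ?_ hnunn
      exact Real.sqrt_le_sqrt (by exact_mod_cast hsparse)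
    have hbb : b ≤ X ^ 2 / (2 * lam) := by
      rw [le_div_iff₀ (by linarith)]
      have := lam_norm1_le ht
      rw [← hb, ← hX] at this
      nlinarith
    have hXb : X ≤ X ^ 2 / lam := by
      rw [le_div_iff₀ hlam]
      nlinarith
    -- chain
    have step1 : dot P P ≤ X * (eps * a) + b * (eps * a) + (eps * b) * a := by
      have c1 : X * norm2 Eu ≤ X * (eps * a) := mul_le_mul_of_nonneg_left hEub hXnn
      have c2 : norm2 (Dt.mulVec t) * norm2 Eu ≤ b * (eps * a) :=
        mul_le_mul hDttb hEub (norm2_nonneg _) hbnn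
      have c3 : norm2 Et * norm2 P ≤ (eps * b) * a :=
        mul_le_mul hEtb hPb (norm2_nonneg _) (mul_nonneg hepsnn hbnn)
      linarith
    have step2 : X * (eps * a) + b * (eps * a) + (eps * b) * a
        = eps * a * (X + 2 * b) := by ring
    have step3 : eps * a * (X + 2 * b)
        ≤ eps * (sk * nu) * (X ^ 2 / lam + 2 * (X ^ 2 / (2 * lam))) := by
      refine mul_le_mul ?_ ?_ (by linarith) ?_
      · exact mul_le_mul_of_nonneg_left hab hepsnn
      · linarith
      · exact mul_nonneg hepsnn (mul_nonneg hsknn hnunn)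
    have step4 : eps * (sk * nu) * (X ^ 2 / lam + 2 * (X ^ 2 / (2 * lam)))
        = 2 * (X ^ 2 / lam) * (eps * (sk * nu)) := by
      field_simp
      ring
    have hRnn : 0 ≤ X ^ 2 / lam := div_nonneg (sq_nonneg _) hlam.le
    have step5 : 2 * (X ^ 2 / lam) * (eps * (sk * nu))
        ≤ 4 * X ^ 2 / lam * eps * sk * nu := by
      have hq : 4 * X ^ 2 / lam * eps * sk * nu
          - 2 * (X ^ 2 / lam) * (eps * (sk * nu))
          = 2 * (X ^ 2 / lam) * (eps * (sk * nu)) := by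
        field_simp
        ring
      have hpos : 0 ≤ 2 * (X ^ 2 / lam) * (eps * (sk * nu)) :=
        mul_nonneg (by linarith) (mul_nonneg hepsnn (mul_nonneg hsknn hnunn))
      linarith
    calc dot P P ≤ X * (eps * a) + b * (eps * a) + (eps * b) * a := step1
      _ = eps * a * (X + 2 * b) := step2
      _ ≤ eps * (sk * nu) * (X ^ 2 / lam + 2 * (X ^ 2 / (2 * lam))) := step3
      _ = 2 * (X ^ 2 / lam) * (eps * (sk * nu)) := step4
      _ ≤ 4 * X ^ 2 / lam * eps * sk * nu := step5
  · -- degenerate case : ‖x‖ < lam, minimizers are zero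
    have hz0 := lasso_min_zero hD hz hcase
    have ht0 := lasso_min_zero hDt ht hcase
    have huz : z - t = 0 := by rw [hz0, ht0, sub_zero]
    rw [huz, Matrix.mulVec_zero]
    have hd0 : dot (0 : Fin d → ℝ) 0 = 0 := by unfold dot; simp
    have hn0 : norm2 (0 : Fin m → ℝ) = 0 := by unfold norm2; simp
    rw [hd0, hn0, mul_zero]
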